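/- Assume the reduction-by-stages setting. Then 𝔪₀ ⊆ ker(ad f₁), i.e. ⁅z, f₁⁆ = 0 for every z ∈ 𝔪₀. -/

import Mathlib

open LieAlgebra Module

noncomputable section

variable {L : Type*} [LieRing L] [LieAlgebra ℂ L]

/-- The `j`-eigenspace of `ad q` on the Lie algebra. -/
def gSp (q : L) (j : ℤ) : Submodule ℂ L where
  carrier := {x | ⁅q, x⁆ = (j : ℂ) • x}
  add_mem' {a b} ha hb := by
    simp only [Set.mem_setOf_eq] at *
    rw [lie_add, ha, hb, smul_add]
  zero_mem' := by simp
  smul_mem' c x hx := by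
    simp only [Set.mem_setOf_eq] at *
    rw [lie_smul, hx, smul_comm]

/-- The grading by `q` (whose adjoint action is diagonalizable with integer eigenvalues)
is good for `f`. -/
structure IsGoodGrading (q f : L) : Prop where
  decomp : (⨆ j : ℤ, gSp q j) = ⊤
  f_mem : f ∈ gSp q (-2)
  inj : ∀ j : ℤ, 1 ≤ j → ∀ x ∈ gSp q j, ⁅f, x⁆ = 0 → x = 0
  surj : ∀ j : ℤ, j ≤ 1 → ∀ y ∈ gSp q (j - 2), ∃ x ∈ gSp q j, ⁅f, x⁆ = y

/-- `m` is a good algebra for `(f, q)`: `m = l ⊕ ⨁_{j ≥ 2} 𝔤_j(q)` for a Lagrangian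
subspace `l` of `𝔤₁(q)` with respect to the symplectic form `(x, y) ↦ B f ⁅x, y⁆`. -/
def IsGoodAlgebra (B : LinearMap.BilinForm ℂ L) (q f : L) (m : Submodule ℂ L) : Prop :=
  ∃ l : Submodule ℂ L, l ≤ gSp q 1 ∧
    (∀ x ∈ l, ∀ y ∈ l, B f ⁅x, y⁆ = 0) ∧
    (∀ x ∈ gSp q 1, (∀ y ∈ l, B f ⁅x, y⁆ = 0) → x ∈ l) ∧
    m = l ⊔ ⨆ j : ℤ, ⨆ _ : 2 ≤ j, gSp q j

lemma mem_gSp {q x : L} {j : ℤ} : x ∈ gSp q j ↔ ⁅q, x⁆ = (j : ℂ) • x := Iff.rfl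

lemma lie_mem_gSp {q x y : L} {a b : ℤ} (hx : x ∈ gSp q a) (hy : y ∈ gSp q b) :
    ⁅x, y⁆ ∈ gSp q (a + b) := by
  rw [mem_gSp] at hx hy ⊢
  rw [leibniz_lie, hx, hy, smul_lie, lie_smul]
  push_cast
  module

/-- Graded pieces whose degrees do not sum to zero are `B`-orthogonal. -/
lemma B_eq_zero_of_degrees (B : LinearMap.BilinForm ℂ L)
    (hBinv : ∀ x y z : L, B ⁅x, y⁆ z = B x ⁅y, z⁆)
    {q x y : L} {a b : ℤ} (hab : a + b ≠ 0)
    (hx : x ∈ gSp q a) (hy : y ∈ gSp q b) : B x y = 0 := by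
  have h1 : B ⁅x, q⁆ y = B x ⁅q, y⁆ := hBinv x q y
  rw [mem_gSp] at hx hy
  rw [hy, ← lie_skew, hx] at h1
  simp only [map_neg, map_smul, LinearMap.neg_apply, LinearMap.smul_apply,
    smul_eq_mul] at h1
  have h2 : ((a : ℂ) + b) * B x y = 0 := by linear_combination -h1
  have h3 : ((a : ℂ) + b) ≠ 0 := by exact_mod_cast hab
  rcases mul_eq_zero.mp h2 with h | h
  · exact absurd h h3
  · exact h

/-- Linearity induction principle for membership in a good algebra. -/
lemma goodAlg_induction {q : L} {l : Submodule ℂ L} (P : L → Prop)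
    (h0 : P 0) (hadd : ∀ x y : L, P x → P y → P (x + y))
    (hl : ∀ x ∈ l, P x)
    (hg : ∀ j : ℤ, 2 ≤ j → ∀ x ∈ gSp q j, P x) :
    ∀ b ∈ l ⊔ ⨆ j : ℤ, ⨆ _ : 2 ≤ j, gSp q j, P b := by
  intro b hb
  rcases Submodule.mem_sup.mp hb with ⟨x, hx, y, hy, rfl⟩
  refine hadd _ _ (hl x hx) ?_
  refine Submodule.iSup_induction (motive := P) _ hy ?_ h0 hadd
  intro j z hz
  by_cases hj : 2 ≤ j
  · rw [iSup_pos hj] at hz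
    exact hg j hj z hz
  · rw [iSup_neg hj] at hz
    rw [Submodule.mem_bot] at hz
    rw [hz]; exact h0

/-- The character `χ = B(f, ·)` vanishes on brackets of elements of a good algebra. -/
lemma chi_lie_eq_zero (B : LinearMap.BilinForm ℂ L)
    (hBinv : ∀ x y z : L, B ⁅x, y⁆ z = B x ⁅y, z⁆)
    {q f : L} (hf : f ∈ gSp q (-2))
    {l : Submodule ℂ L} (hlle : l ≤ gSp q 1)
    (hlag : ∀ x ∈ l, ∀ y ∈ l, B f ⁅x, y⁆ = 0) :
    ∀ a ∈ l ⊔ ⨆ j : ℤ, ⨆ _ : 2 ≤ j, gSp q j,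
      ∀ b ∈ l ⊔ ⨆ j : ℤ, ⨆ _ : 2 ≤ j, gSp q j, B f ⁅a, b⁆ = 0 := by
  -- generator-level vanishing by degree reasons
  have gen : ∀ (ja : ℤ) (a : L), a ∈ gSp q ja → ∀ (jb : ℤ) (b : L), b ∈ gSp q jb →
      ja + jb ≠ 2 → B f ⁅a, b⁆ = 0 := by
    intro ja a ha jb b hb hne
    refine B_eq_zero_of_degrees B hBinv ?_ hf (lie_mem_gSp ha hb)
    omega
  refine goodAlg_induction _ ?_ ?_ ?_ ?_
  · intro b _; simp
  · intro x y hx hy b hb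
    rw [add_lie, map_add, hx b hb, hy b hb, add_zero]
  · -- a ∈ l
    intro a ha
    refine goodAlg_induction _ ?_ ?_ ?_ ?_
    · simp
    · intro x y hx hy
      rw [lie_add, map_add, hx, hy, add_zero]
    · intro b hb; exact hlag a ha b hb
    · intro j hj b hb
      exact gen 1 a (hlle ha) j b hb (by omega)
  · -- a ∈ gSp q j, 2 ≤ j
    intro j hj a ha
    refine goodAlg_induction _ ?_ ?_ ?_ ?_
    · simp
    · intro x y hx hy
      rw [lie_add, map_add, hx, hy, add_zero]
    · intro b hb
      exact gen j a ha 1 b (hlle hb) (by omega)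
    · intro j' hj' b hb
      exact gen j a ha j' b hb (by omega)

/-- In the reduction-by-stages setting, `𝔪₀ ⊆ ker (ad f₁)`. -/
theorem m₀_subset_ker_ad_f₁
    [FiniteDimensional ℂ L] [LieAlgebra.IsSimple ℂ L]
    (B : LinearMap.BilinForm ℂ L)
    (hBsymm : ∀ x y : L, B x y = B y x)
    (hBnondeg : ∀ x : L, (∀ y : L, B x y = 0) → x = 0)
    (hBinv : ∀ x y z : L, B ⁅x, y⁆ z = B x ⁅y, z⁆)
    (f₁ f₂ q₁ q₂ : L)
    (hnil₁ : IsNilpotent (ad ℂ L f₁)) (hnil₂ : IsNilpotent (ad ℂ L f₂))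
    (hgood₁ : IsGoodGrading q₁ f₁) (hgood₂ : IsGoodGrading q₂ f₂)
    (m₁ m₂ m₀ : Submodule ℂ L)
    (hma₁ : IsGoodAlgebra B q₁ f₁ m₁) (hma₂ : IsGoodAlgebra B q₂ f₂ m₂)
    (hq₁q₂ : ⁅q₁, q₂⁆ = 0)
    (hsum : m₁ ⊔ m₀ = m₂) (hdisj : m₁ ⊓ m₀ = ⊥)
    (hm₀alg : ∀ x ∈ m₀, ∀ y ∈ m₀, ⁅x, y⁆ ∈ m₀)
    (hm₀q₁ : ∀ x ∈ m₀, ⁅q₁, x⁆ ∈ m₀) (hm₀q₂ : ∀ x ∈ m₀, ⁅q₂, x⁆ ∈ m₀)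
    (hideal : ∀ x ∈ m₂, ∀ y ∈ m₁, ⁅x, y⁆ ∈ m₁)
    (hf₀ : f₂ - f₁ ∈ gSp q₁ 0) (hm₀0 : m₀ ≤ gSp q₁ 0)
    (hq₀f₁ : ⁅q₂ - q₁, f₁⁆ = 0)
     :
    ∀ z ∈ m₀, ⁅z, f₁⁆ = 0 := by
  obtain ⟨l₁, hl₁le, hlag₁, -, hm₁eq⟩ := hma₁
  obtain ⟨l₂, hl₂le, hlag₂, -, hm₂eq⟩ := hma₂
  intro z hz
  have hz0 : z ∈ gSp q₁ 0 := hm₀0 hz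
  have hzm₂ : z ∈ m₂ := by
    rw [← hsum]; exact Submodule.mem_sup_right hz
  have hw : ⁅z, f₁⁆ ∈ gSp q₁ (-2) := by
    have := lie_mem_gSp hz0 hgood₁.f_mem
    simpa using this
  -- show `B ⁅z,f₁⁆ y = 0` for all `y`, then conclude via nondegeneracy
  apply hBnondeg
  intro y
  have hy : y ∈ ⨆ j : ℤ, gSp q₁ j := by
    rw [hgood₁.decomp]; trivial
  refine Submodule.iSup_induction (motive := fun y => B ⁅z, f₁⁆ y = 0) _ hy ?_ (by simp) ?_
  · intro j y hyj
    by_cases hj : j = 2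
    · -- the interesting case: `y ∈ gSp q₁ 2`
      subst hj
      have hym₁ : y ∈ m₁ := by
        rw [hm₁eq]
        refine Submodule.mem_sup_right ?_
        have h2 : (⨆ _ : (2 : ℤ) ≤ 2, gSp q₁ 2) ≤ ⨆ j : ℤ, ⨆ _ : 2 ≤ j, gSp q₁ j :=
          le_iSup (fun j : ℤ => ⨆ _ : 2 ≤ j, gSp q₁ j) 2
        rw [iSup_pos (le_refl (2 : ℤ))] at h2
        exact h2 hyj
      have hym₂ : y ∈ m₂ := by
        rw [← hsum]; exact Submodule.mem_sup_left hym₁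
      have hzy : ⁅z, y⁆ ∈ gSp q₁ 2 := by
        have := lie_mem_gSp hz0 hyj
        simpa using this
      -- `B ⁅z,f₁⁆ y = - B f₁ ⁅z,y⁆`
      have e1 : B ⁅z, f₁⁆ y = - B f₁ ⁅z, y⁆ := by
        rw [← lie_skew z f₁, map_neg, LinearMap.neg_apply, hBinv f₁ z y]
      -- `B f₂ ⁅z,y⁆ = 0` since `z, y ∈ m₂`
      have e2 : B f₂ ⁅z, y⁆ = 0 := by
        have hz2 : z ∈ l₂ ⊔ ⨆ j : ℤ, ⨆ _ : 2 ≤ j, gSp q₂ j := by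
          rw [← hm₂eq]; exact hzm₂
        have hy2 : y ∈ l₂ ⊔ ⨆ j : ℤ, ⨆ _ : 2 ≤ j, gSp q₂ j := by
          rw [← hm₂eq]; exact hym₂
        exact chi_lie_eq_zero B hBinv hgood₂.f_mem hl₂le hlag₂ z hz2 y hy2
      -- `B (f₂ - f₁) ⁅z,y⁆ = 0` by degree reasons
      have e3 : B (f₂ - f₁) ⁅z, y⁆ = 0 :=
        B_eq_zero_of_degrees B hBinv (by norm_num) hf₀ hzy
      have e4 : B f₁ ⁅z, y⁆ = 0 := by
        rw [map_sub, LinearMap.sub_apply, e2, zero_sub, neg_eq_zero] at e3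
        exact e3
      rw [e1, e4, neg_zero]
    · exact B_eq_zero_of_degrees B hBinv (by omega) hw hyj
  · intro x y hx hy
    rw [map_add, hx, hy, add_zero]
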